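/- Let J be a 3-dimensional complex Jordan algebra of rank 3, i.e., a commutative (not necessarily associative) unital ℂ-algebra of dimension 3 satisfying the Jordan identity (x·x)·(x·y) = x·((x·x)·y) for all x, y ∈ J, and containing an element x such that (1, x, x·x) is linearly independent. Then J is isomorphic as a ℂ-algebra to exactly one of the following three algebras: ℂ × ℂ × ℂ, ℂ × ℂ[X]/(X²), and ℂ[X]/(X³). -/

import Mathlib

open Polynomial

/-- A (not necessarily associative) unital commutative ℂ-algebra `(J, mul, one)`
is isomorphic, as a ℂ-algebra, to the (associative) ℂ-algebra `A` if there is a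
ℂ-linear equivalence sending `one` to `1` and `mul` to the product of `A`. -/
def IsAlgIsoTo (J : Type) [AddCommGroup J] [Module ℂ J]
    (mul : J →ₗ[ℂ] J →ₗ[ℂ] J) (one : J)
    (A : Type) [Ring A] [Algebra ℂ A] : Prop :=
  ∃ e : J ≃ₗ[ℂ] A, e one = 1 ∧ ∀ x y : J, e (mul x y) = e x * e y



noncomputable section JordanClassificationAux

/-- transfer along an algebra equivalence -/
lemma IsAlgIsoTo_aux_trans {J : Type} [AddCommGroup J] [Module ℂ J]
    {mul : J →ₗ[ℂ] J →ₗ[ℂ] J} {one : J} {A B : Type} [Ring A] [Algebra ℂ A]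
    [Ring B] [Algebra ℂ B]
    (h : ∃ e : J ≃ₗ[ℂ] A, e one = 1 ∧ ∀ x y : J, e (mul x y) = e x * e y)
    (f : A ≃ₐ[ℂ] B) :
    ∃ e : J ≃ₗ[ℂ] B, e one = 1 ∧ ∀ x y : J, e (mul x y) = e x * e y := by
  obtain ⟨e, h1, hm⟩ := h
  exact ⟨e.trans f.toLinearEquiv, by simp [h1], fun x y => by simp [hm x y]⟩

lemma ringEquiv_of_both {J : Type} [AddCommGroup J] [Module ℂ J]
    {mul : J →ₗ[ℂ] J →ₗ[ℂ] J} {one : J} {A B : Type} [Ring A] [Algebra ℂ A]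
    [Ring B] [Algebra ℂ B]
    (hA : ∃ e : J ≃ₗ[ℂ] A, e one = 1 ∧ ∀ x y : J, e (mul x y) = e x * e y)
    (hB : ∃ e : J ≃ₗ[ℂ] B, e one = 1 ∧ ∀ x y : J, e (mul x y) = e x * e y) :
    Nonempty (A ≃+* B) := by
  obtain ⟨e₁, -, hm₁⟩ := hA
  obtain ⟨e₂, -, hm₂⟩ := hB
  set g := e₁.symm.trans e₂ with hgdef
  have hg : ∀ a b : A, g (a * b) = g a * g b := by
    intro a b
    have h1 : e₁ (mul (e₁.symm a) (e₁.symm b)) = a * b := by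
      rw [hm₁]; simp
    have h2 : e₁.symm (a * b) = mul (e₁.symm a) (e₁.symm b) := by
      rw [← h1]; simp
    simp only [hgdef, LinearEquiv.trans_apply, h2, hm₂]
  exact ⟨{ g.toAddEquiv with map_mul' := hg }⟩

abbrev Q2 : Type := ℂ[X] ⧸ Ideal.span {(X : ℂ[X]) ^ 2}
abbrev Q3 : Type := ℂ[X] ⧸ Ideal.span {(X : ℂ[X]) ^ 3}

lemma mkX2_ne_zero : (Ideal.Quotient.mk (Ideal.span {(X : ℂ[X]) ^ 2}) X) ≠ 0 := by
  rw [Ne, Ideal.Quotient.eq_zero_iff_mem, Ideal.mem_span_singleton]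
  intro h
  have := Polynomial.natDegree_le_of_dvd h Polynomial.X_ne_zero
  simp at this

lemma mkX2_sq : (Ideal.Quotient.mk (Ideal.span {(X : ℂ[X]) ^ 2}) X) *
    (Ideal.Quotient.mk (Ideal.span {(X : ℂ[X]) ^ 2}) X) = 0 := by
  rw [← map_mul, Ideal.Quotient.eq_zero_iff_mem, Ideal.mem_span_singleton]
  exact ⟨1, by ring⟩

lemma mkX3sq_ne_zero : (Ideal.Quotient.mk (Ideal.span {(X : ℂ[X]) ^ 3}) (X ^ 2)) ≠ 0 := by
  rw [Ne, Ideal.Quotient.eq_zero_iff_mem, Ideal.mem_span_singleton]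
  intro h
  have := Polynomial.natDegree_le_of_dvd h (pow_ne_zero _ Polynomial.X_ne_zero)
  simp at this

lemma mkX3sq_sq : (Ideal.Quotient.mk (Ideal.span {(X : ℂ[X]) ^ 3}) (X ^ 2)) *
    (Ideal.Quotient.mk (Ideal.span {(X : ℂ[X]) ^ 3}) (X ^ 2)) = 0 := by
  rw [← map_mul, Ideal.Quotient.eq_zero_iff_mem, Ideal.mem_span_singleton]
  exact ⟨X, by ring⟩

/-- ℂ³ has no nonzero square-zero elements-/
lemma reduced_prod3 (m : ℂ × ℂ × ℂ) (h : m * m = 0) : m = 0 := by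
  obtain ⟨a, b, c⟩ := m
  simp only [Prod.mk_mul_mk, Prod.mk_eq_zero, mul_self_eq_zero] at h ⊢
  exact h

lemma no_equiv_1_2 (f : (ℂ × ℂ × ℂ) ≃+* (ℂ × Q2)) : False := by
  set n : ℂ × Q2 := (0, Ideal.Quotient.mk _ X) with hn
  have hnz : n ≠ 0 := by
    simp only [hn, Ne, Prod.mk_eq_zero, not_and]
    intro; exact mkX2_ne_zero
  have hsq : n * n = 0 := by
    rw [hn, Prod.mk_mul_mk, mul_zero, Prod.mk_eq_zero]
    exact ⟨rfl, mkX2_sq⟩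
  have : f.symm n = 0 := reduced_prod3 _ (by rw [← map_mul, hsq, map_zero])
  exact hnz (by rw [← f.apply_symm_apply n, this, map_zero])

lemma no_equiv_1_3 (f : (ℂ × ℂ × ℂ) ≃+* Q3) : False := by
  set n : Q3 := Ideal.Quotient.mk _ (X ^ 2) with hn
  have : f.symm n = 0 := reduced_prod3 _ (by rw [← map_mul, hn, mkX3sq_sq, map_zero])
  exact mkX3sq_ne_zero (by rw [← hn, ← f.apply_symm_apply n, this, map_zero])

/-- evaluation at 0 on Q3 -/
def ev0 : Q3 →+* ℂ :=
  Ideal.Quotient.lift _ (Polynomial.evalRingHom (0 : ℂ)) (by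
    intro a ha
    rw [Ideal.mem_span_singleton] at ha
    obtain ⟨b, rfl⟩ := ha
    simp)

lemma idem_Q3 (u : Q3) (hu : u * u = u) : u = 0 ∨ u = 1 := by
  have h3 : ∀ {M : Type} [Monoid M] (w : M), w * w = w → w ^ 3 = w := by
    intro M _ w hw
    rw [pow_succ, pow_two, hw, hw]
  have key : ∀ v : Q3, v * v = v → ev0 v = 0 → v = 0 := by
    intro v hv hev
    obtain ⟨q, rfl⟩ := Ideal.Quotient.mk_surjective v
    have hq0 : Polynomial.eval 0 q = 0 := hev
    have hXdvd : X ∣ q := by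
      have := (Polynomial.dvd_iff_isRoot (p := q) (a := (0 : ℂ))).mpr hq0
      simpa using this
    have hcube : (Ideal.Quotient.mk (Ideal.span {(X : ℂ[X]) ^ 3}) q) ^ 3 = 0 := by
      rw [← map_pow, Ideal.Quotient.eq_zero_iff_mem, Ideal.mem_span_singleton]
      exact pow_dvd_pow_of_dvd hXdvd 3
    rw [← h3 _ hv, hcube]
  have hev : ev0 u * ev0 u = ev0 u := by rw [← map_mul, hu]
  rcases mul_eq_zero.mp (show ev0 u * (ev0 u - 1) = 0 by rw [mul_sub, hev]; ring) with h | h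
  · exact Or.inl (key u hu h)
  · right
    have hv : (1 - u) * (1 - u) = 1 - u := by linear_combination hu
    have hev' : ev0 (1 - u) = 0 := by
      rw [map_sub, map_one, sub_eq_zero.mp h]; ring
    have := key _ hv hev'
    linear_combination -this

lemma no_equiv_2_3 (f : (ℂ × Q2) ≃+* Q3) : False := by
  have h01 : ((1 : ℂ), (0 : Q2)) ≠ 0 := by
    simp [Prod.ext_iff]
  have h11 : ((1 : ℂ), (0 : Q2)) ≠ 1 := by
    intro h
    have h2 : (0 : Q2) = 1 := congrArg Prod.snd h
    have hdvd : ((X : ℂ[X]) ^ 2) ∣ 1 := by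
      rw [← Ideal.mem_span_singleton, ← Ideal.Quotient.eq_zero_iff_mem, map_one, ← h2]
    have := Polynomial.natDegree_le_of_dvd hdvd one_ne_zero
    simp at this
  set u : Q3 := f ((1 : ℂ), (0 : Q2)) with hu
  have hidem : u * u = u := by
    rw [hu, ← map_mul, Prod.mk_mul_mk, mul_one, mul_zero]
  rcases idem_Q3 u hidem with h | h
  · exact h01 (f.injective (by rw [← hu, h, map_zero]))
  · exact h11 (f.injective (by rw [← hu, h, map_one]))

lemma exists_iso_adjoinRoot (J : Type) [AddCommGroup J] [Module ℂ J] [FiniteDimensional ℂ J]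
    (mul : J →ₗ[ℂ] J →ₗ[ℂ] J) (one : J)
    (hcomm : ∀ x y : J, mul x y = mul y x)
    (hone : ∀ x : J, mul one x = x)
    (hjordan : ∀ x y : J, mul (mul x x) (mul x y) = mul x (mul (mul x x) y))
    (hdim : Module.finrank ℂ J = 3)
    (hrank : ∃ x : J, LinearIndependent ℂ ![one, x, mul x x]) :
    ∃ p : ℂ[X], p.Monic ∧ p.natDegree = 3 ∧
      ∃ e : J ≃ₗ[ℂ] AdjoinRoot p, e one = 1 ∧ ∀ u v : J, e (mul u v) = e u * e v := by
  obtain ⟨x, hli⟩ := hrank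
  have hcard : Fintype.card (Fin 3) = Module.finrank ℂ J := by simp [hdim]
  set b : Module.Basis (Fin 3) ℂ J := basisOfLinearIndependentOfCardEqFinrank hli hcard with hbdef
  have hb0 : b 0 = one := by rw [hbdef, coe_basisOfLinearIndependentOfCardEqFinrank]; rfl
  have hb1 : b 1 = x := by rw [hbdef, coe_basisOfLinearIndependentOfCardEqFinrank]; rfl
  have hb2 : b 2 = mul x x := by rw [hbdef, coe_basisOfLinearIndependentOfCardEqFinrank]; rfl
  set α : ℂ := b.repr (mul x (mul x x)) 0 with hα
  set β : ℂ := b.repr (mul x (mul x x)) 1 with hβ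
  set γ : ℂ := b.repr (mul x (mul x x)) 2 with hγ
  have hx3 : mul x (mul x x) = α • one + β • x + γ • (mul x x) := by
    have := b.sum_repr (mul x (mul x x))
    rw [Fin.sum_univ_three, hb0, hb1, hb2] at this
    rw [← this]
  have hx4 : mul (mul x x) (mul x x)
      = (γ * α) • one + (α + γ * β) • x + (β + γ ^ 2) • (mul x x) := by
    have h := hjordan x x
    rw [hcomm (mul x x) x, hx3] at h
    -- h : mul (mul x x) (mul x x) = mul x (α • one + β • x + γ • mul x x)
    rw [h, map_add, map_add, map_smul, map_smul, map_smul, hcomm x one, hone, hx3]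
    module
  set p : ℂ[X] := X ^ 3 - C γ * X ^ 2 - C β * X - C α with hpdef
  have hpm : p.Monic := by
    unfold p
    monicity!
  have hpd : p.natDegree = 3 := by
    unfold p
    compute_degree!
  refine ⟨p, hpm, hpd, ?_⟩
  set pb : PowerBasis ℂ (AdjoinRoot p) := AdjoinRoot.powerBasis' hpm with hpbdef
  have hdim3 : pb.dim = 3 := by rw [hpbdef, AdjoinRoot.powerBasis'_dim, hpd]
  set bb : Module.Basis (Fin 3) ℂ (AdjoinRoot p) := pb.basis.reindex (finCongr hdim3) with hbbdef
  have hbb : ∀ i : Fin 3, bb i = AdjoinRoot.root p ^ (i : ℕ) := by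
    intro i
    rw [hbbdef, Module.Basis.reindex_apply, pb.basis_eq_pow]
    rw [show pb.gen = AdjoinRoot.root p from AdjoinRoot.powerBasis'_gen hpm]
    congr 1
  set e : J ≃ₗ[ℂ] AdjoinRoot p := b.equiv bb (Equiv.refl _) with hedef
  have he : ∀ i : Fin 3, e (b i) = bb i := by
    intro i
    rw [hedef, b.equiv_apply, Equiv.refl_apply]
  have he0 : e one = 1 := by rw [← hb0, he 0, hbb 0]; norm_num
  have he1 : e x = AdjoinRoot.root p := by rw [← hb1, he 1, hbb 1]; norm_num
  have he2 : e (mul x x) = AdjoinRoot.root p ^ 2 := by rw [← hb2, he 2, hbb 2]; norm_num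
  -- the cubic relation for the root
  have hroot : AdjoinRoot.root p ^ 3
      = α • (1 : AdjoinRoot p) + β • AdjoinRoot.root p + γ • AdjoinRoot.root p ^ 2 := by
    have h0 : (aeval (AdjoinRoot.root p)) p = 0 := by
      rw [AdjoinRoot.aeval_eq, AdjoinRoot.mk_self]
    rw [hpdef] at h0
    simp only [map_sub, map_mul, map_pow, aeval_X, aeval_C] at h0
    rw [Algebra.smul_def, Algebra.smul_def, Algebra.smul_def]
    linear_combination h0
  -- key products on basis vectors
  have key : ∀ i j : Fin 3, e (mul (b i) (b j)) = e (b i) * e (b j) := by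
    have hx2' : e (mul x x) = e x * e x := by rw [he1, he2]; ring
    have hx3' : e (mul x (mul x x)) = e x * e (mul x x) := by
      rw [hx3, map_add, map_add, map_smul, map_smul, map_smul, he0, he1, he2, ← hroot]
      ring
    have h4 : AdjoinRoot.root p ^ 2 * AdjoinRoot.root p ^ 2
        = (γ * α) • (1 : AdjoinRoot p) + (α + γ * β) • AdjoinRoot.root p
          + (β + γ ^ 2) • AdjoinRoot.root p ^ 2 := by
      have h5 : AdjoinRoot.root p ^ 2 * AdjoinRoot.root p ^ 2
          = AdjoinRoot.root p * AdjoinRoot.root p ^ 3 := by ring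
      rw [h5, hroot]
      simp only [mul_add, mul_smul_comm, mul_one]
      rw [show AdjoinRoot.root p * AdjoinRoot.root p ^ 2 = AdjoinRoot.root p ^ 3 by ring, hroot,
        show AdjoinRoot.root p * AdjoinRoot.root p = AdjoinRoot.root p ^ 2 by ring]
      module
    have hx4' : e (mul (mul x x) (mul x x)) = e (mul x x) * e (mul x x) := by
      rw [hx4, map_add, map_add, map_smul, map_smul, map_smul, he0, he1, he2]
      exact h4.symm
    intro i j
    fin_cases i <;> fin_cases j <;>
      simp only [Fin.zero_eta, Fin.mk_one, Fin.reduceFinMk, hb0, hb1, hb2] <;>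
      first
        | (rw [hone, he0, one_mul])
        | (rw [hcomm _ one, hone, he0, mul_one])
        | exact hx2'
        | exact hx3'
        | (rw [hcomm (mul x x) x]; rw [hx3']; ring)
        | exact hx4'
  -- bilinear extension
  refine ⟨e, he0, ?_⟩
  intro u v
  have hu := b.sum_repr u
  have hv := b.sum_repr v
  calc e (mul u v) = e (mul (∑ i, b.repr u i • b i) (∑ j, b.repr v j • b j)) := by
        rw [hu, hv]
    _ = ∑ i, ∑ j, b.repr u i • b.repr v j • e (mul (b i) (b j)) := by
        rw [map_sum]
        simp only [map_smul, LinearMap.coe_sum, LinearMap.sum_apply, LinearMap.smul_apply,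
          map_sum, Finset.smul_sum]
        rw [Finset.sum_comm]
        exact Finset.sum_congr rfl fun i _ => Finset.sum_congr rfl fun j _ => smul_comm _ _ _
    _ = ∑ i, ∑ j, b.repr u i • b.repr v j • (e (b i) * e (b j)) := by
        refine Finset.sum_congr rfl fun i _ => Finset.sum_congr rfl fun j _ => ?_
        rw [key i j]
    _ = (∑ i, b.repr u i • e (b i)) * (∑ j, b.repr v j • e (b j)) := by
        rw [Finset.sum_mul]
        simp only [Finset.mul_sum, smul_mul_assoc, mul_smul_comm]
        exact Finset.sum_congr rfl fun i _ => Finset.sum_congr rfl fun j _ => smul_comm _ _ _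
    _ = e u * e v := by
        have hu' : e u = ∑ i, b.repr u i • e (b i) := by
          conv_lhs => rw [← hu]
          rw [map_sum]
          simp only [map_smul]
        have hv' : e v = ∑ j, b.repr v j • e (b j) := by
          conv_lhs => rw [← hv]
          rw [map_sum]
          simp only [map_smul]
        rw [hu', hv']

lemma cubic_factor (p : ℂ[X]) (hpm : p.Monic) (hpd : p.natDegree = 3) :
    (∃ a b c : ℂ, a ≠ b ∧ a ≠ c ∧ b ≠ c ∧ p = (X - C a) * (X - C b) * (X - C c)) ∨
    (∃ s r : ℂ, s ≠ r ∧ p = (X - C s) * (X - C r) ^ 2) ∨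
    (∃ r : ℂ, p = (X - C r) ^ 3) := by
  have hs : p.Splits := IsAlgClosed.splits p
  have hcard : p.roots.card = 3 := by
    rw [(Polynomial.splits_iff_card_roots).mp hs, hpd]
  obtain ⟨a, b, c, habc⟩ := Multiset.card_eq_three.mp hcard
  have hprod : p = (X - C a) * (X - C b) * (X - C c) := by
    conv_lhs => rw [hs.eq_prod_roots_of_monic hpm]
    rw [habc]
    simp [Multiset.map_cons, Multiset.prod_cons, mul_assoc]
  by_cases hab : a = b
  · by_cases hac : a = c
    · right; right
      exact ⟨a, by rw [hprod, ← hab, ← hac]; ring⟩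
    · right; left
      exact ⟨c, a, fun h => hac h.symm, by rw [hprod, ← hab]; ring⟩
  · by_cases hac : a = c
    · right; left
      exact ⟨b, a, fun h => hab h.symm, by rw [hprod, ← hac]; ring⟩
    · by_cases hbc : b = c
      · right; left
        exact ⟨a, b, hab, by rw [hprod, ← hbc]; ring⟩
      · left
        exact ⟨a, b, c, hab, hac, hbc, hprod⟩

lemma equiv_case1 (p : ℂ[X]) {a b c : ℂ} (hab : a ≠ b) (hac : a ≠ c) (hbc : b ≠ c)
    (hp : p = (X - C a) * (X - C b) * (X - C c)) :
    Nonempty (AdjoinRoot p ≃ₐ[ℂ] ℂ × ℂ × ℂ) := by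
  have hpm : p.Monic := by
    rw [hp]; exact ((monic_X_sub_C a).mul (monic_X_sub_C b)).mul (monic_X_sub_C c)
  have hpd : p.natDegree = 3 := by
    rw [hp]
    compute_degree!
  have h0 : aeval ((a, b, c) : ℂ × ℂ × ℂ) p = 0 := by
    rw [hp]
    simp only [map_mul, map_sub, aeval_X, aeval_C]
    rw [show (algebraMap ℂ (ℂ × ℂ × ℂ)) a = (a, a, a) from rfl,
      show (algebraMap ℂ (ℂ × ℂ × ℂ)) b = (b, b, b) from rfl,
      show (algebraMap ℂ (ℂ × ℂ × ℂ)) c = (c, c, c) from rfl]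
    simp [Prod.ext_iff, Prod.mk_mul_mk, Prod.mk_sub_mk]
  set φ : AdjoinRoot p →ₐ[ℂ] ℂ × ℂ × ℂ := AdjoinRoot.liftAlgHom p (Algebra.ofId ℂ _) ((a, b, c)) h0 with hφ
  have hinj : Function.Injective φ := by
    rw [injective_iff_map_eq_zero]
    intro z hz
    obtain ⟨q, rfl⟩ := AdjoinRoot.mk_surjective z
    change aeval _ q = 0 at hz
    have h1 : aeval a q = 0 := by
      have h := Polynomial.aeval_algHom_apply (AlgHom.fst ℂ ℂ (ℂ × ℂ)) ((a, b, c) : ℂ × ℂ × ℂ) q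
      rw [hz] at h
      simpa using h
    have h2 : aeval b q = 0 := by
      have h := Polynomial.aeval_algHom_apply
        ((AlgHom.fst ℂ ℂ ℂ).comp (AlgHom.snd ℂ ℂ (ℂ × ℂ))) ((a, b, c) : ℂ × ℂ × ℂ) q
      rw [hz] at h
      simpa using h
    have h3 : aeval c q = 0 := by
      have h := Polynomial.aeval_algHom_apply
        ((AlgHom.snd ℂ ℂ ℂ).comp (AlgHom.snd ℂ ℂ (ℂ × ℂ))) ((a, b, c) : ℂ × ℂ × ℂ) q
      rw [hz] at h
      simpa using h
    have hda : (X - C a) ∣ q := Polynomial.dvd_iff_isRoot.mpr (by simpa using h1)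
    have hdb : (X - C b) ∣ q := Polynomial.dvd_iff_isRoot.mpr (by simpa using h2)
    have hdc : (X - C c) ∣ q := Polynomial.dvd_iff_isRoot.mpr (by simpa using h3)
    have cab : IsCoprime (X - C a : ℂ[X]) (X - C b) :=
      Polynomial.isCoprime_X_sub_C_of_isUnit_sub (sub_ne_zero_of_ne hab).isUnit
    have cac : IsCoprime (X - C a : ℂ[X]) (X - C c) :=
      Polynomial.isCoprime_X_sub_C_of_isUnit_sub (sub_ne_zero_of_ne hac).isUnit
    have cbc : IsCoprime (X - C b : ℂ[X]) (X - C c) :=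
      Polynomial.isCoprime_X_sub_C_of_isUnit_sub (sub_ne_zero_of_ne hbc).isUnit
    have hpq : p ∣ q := by
      rw [hp, mul_assoc]
      exact (cab.mul_right cac).mul_dvd hda (cbc.mul_dvd hdb hdc)
    exact AdjoinRoot.mk_eq_zero.mpr hpq
  have : Module.Finite ℂ (AdjoinRoot p) :=
    Module.Finite.of_basis (AdjoinRoot.powerBasis' hpm).basis
  have hfr : Module.finrank ℂ (AdjoinRoot p) = Module.finrank ℂ (ℂ × ℂ × ℂ) := by
    rw [(AdjoinRoot.powerBasis' hpm).finrank, AdjoinRoot.powerBasis'_dim, hpd]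
    simp [Module.finrank_prod]
  have hsurj : Function.Surjective φ :=
    (LinearMap.injective_iff_surjective_of_finrank_eq_finrank
      (f := φ.toLinearMap) hfr).mp hinj
  exact ⟨AlgEquiv.ofBijective φ ⟨hinj, hsurj⟩⟩

lemma rootX2_sq : (AdjoinRoot.root ((X : ℂ[X]) ^ 2)) ^ 2 = 0 := by
  rw [← AdjoinRoot.mk_X, ← map_pow, AdjoinRoot.mk_self]

lemma rootX3_cube : (AdjoinRoot.root ((X : ℂ[X]) ^ 3)) ^ 3 = 0 := by
  rw [← AdjoinRoot.mk_X, ← map_pow, AdjoinRoot.mk_self]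

lemma comp_shift_dvd {q : ℂ[X]} {r : ℂ} {n : ℕ}
    (h : (X : ℂ[X]) ^ n ∣ q.comp (X + C r)) : (X - C r) ^ n ∣ q := by
  obtain ⟨g, hg⟩ := h
  refine ⟨g.comp (X - C r), ?_⟩
  have h3 := congrArg (fun f : ℂ[X] => f.comp (X - C r)) hg
  simp only [Polynomial.mul_comp, Polynomial.pow_comp, Polynomial.X_comp,
    Polynomial.add_comp, Polynomial.C_comp] at h3
  rw [Polynomial.comp_assoc, Polynomial.add_comp, Polynomial.X_comp, Polynomial.C_comp,
    sub_add_cancel, Polynomial.comp_X] at h3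
  exact h3

lemma aeval_shift_root {q : ℂ[X]} {r : ℂ} {n : ℕ}
    (h : aeval (AdjoinRoot.root ((X : ℂ[X]) ^ n) + algebraMap ℂ _ r) q = 0) :
    (X - C r) ^ n ∣ q := by
  apply comp_shift_dvd (r := r)
  rw [← AdjoinRoot.mk_eq_zero (f := (X : ℂ[X]) ^ n), ← AdjoinRoot.aeval_eq,
    Polynomial.aeval_comp]
  simpa using h

lemma equiv_case2 (p : ℂ[X]) {s r : ℂ} (hsr : s ≠ r)
    (hp : p = (X - C s) * (X - C r) ^ 2) :
    Nonempty (AdjoinRoot p ≃ₐ[ℂ] ℂ × AdjoinRoot ((X : ℂ[X]) ^ 2)) := by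
  have hpm : p.Monic := by
    rw [hp]; exact (monic_X_sub_C s).mul ((monic_X_sub_C r).pow 2)
  have hpd : p.natDegree = 3 := by
    rw [hp]
    compute_degree!
  set ar : AdjoinRoot ((X : ℂ[X]) ^ 2) := AdjoinRoot.root _ + algebraMap ℂ _ r with har
  have h0 : aeval ((s, ar) : ℂ × AdjoinRoot ((X : ℂ[X]) ^ 2)) p = 0 := by
    rw [hp]
    simp only [map_mul, map_sub, map_pow, aeval_X, aeval_C]
    rw [show (algebraMap ℂ (ℂ × AdjoinRoot ((X : ℂ[X]) ^ 2))) s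
        = (s, algebraMap ℂ _ s) from rfl,
      show (algebraMap ℂ (ℂ × AdjoinRoot ((X : ℂ[X]) ^ 2))) r
        = (r, algebraMap ℂ _ r) from rfl]
    have h2 : ((s, ar) : ℂ × AdjoinRoot ((X : ℂ[X]) ^ 2)) - (r, algebraMap ℂ _ r)
        = (s - r, AdjoinRoot.root _) := by
      rw [Prod.mk_sub_mk, har]; simp
    rw [h2]
    ext
    · simp
    · simp [Prod.snd_mul, Prod.pow_snd, rootX2_sq]
  set φ : AdjoinRoot p →ₐ[ℂ] ℂ × AdjoinRoot ((X : ℂ[X]) ^ 2) :=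
    AdjoinRoot.liftAlgHom p (Algebra.ofId ℂ _) ((s, ar)) h0 with hφ
  have hinj : Function.Injective φ := by
    rw [injective_iff_map_eq_zero]
    intro z hz
    obtain ⟨q, rfl⟩ := AdjoinRoot.mk_surjective z
    change aeval _ q = 0 at hz
    have h1 : aeval s q = 0 := by
      have h := Polynomial.aeval_algHom_apply
        (AlgHom.fst ℂ ℂ (AdjoinRoot ((X : ℂ[X]) ^ 2))) ((s, ar)) q
      rw [hz] at h
      simpa using h
    have h2 : aeval ar q = 0 := by
      have h := Polynomial.aeval_algHom_apply
        (AlgHom.snd ℂ ℂ (AdjoinRoot ((X : ℂ[X]) ^ 2))) ((s, ar)) q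
      rw [hz] at h
      simpa using h
    have hds : (X - C s) ∣ q := Polynomial.dvd_iff_isRoot.mpr (by simpa using h1)
    have hdr : (X - C r) ^ 2 ∣ q := aeval_shift_root (by rw [← har]; exact h2)
    have cop : IsCoprime (X - C s : ℂ[X]) ((X - C r) ^ 2) :=
      (Polynomial.isCoprime_X_sub_C_of_isUnit_sub (sub_ne_zero_of_ne hsr).isUnit).pow_right
    have hpq : p ∣ q := by
      rw [hp]
      exact cop.mul_dvd hds hdr
    exact AdjoinRoot.mk_eq_zero.mpr hpq
  have : Module.Finite ℂ (AdjoinRoot p) :=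
    Module.Finite.of_basis (AdjoinRoot.powerBasis' hpm).basis
  have hX2m : ((X : ℂ[X]) ^ 2).Monic := monic_X_pow 2
  have : Module.Finite ℂ (AdjoinRoot ((X : ℂ[X]) ^ 2)) :=
    Module.Finite.of_basis (AdjoinRoot.powerBasis' hX2m).basis
  have hfr : Module.finrank ℂ (AdjoinRoot p)
      = Module.finrank ℂ (ℂ × AdjoinRoot ((X : ℂ[X]) ^ 2)) := by
    rw [(AdjoinRoot.powerBasis' hpm).finrank, AdjoinRoot.powerBasis'_dim, hpd,
      Module.finrank_prod, (AdjoinRoot.powerBasis' hX2m).finrank, AdjoinRoot.powerBasis'_dim]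
    simp
  have hsurj : Function.Surjective φ :=
    (LinearMap.injective_iff_surjective_of_finrank_eq_finrank
      (f := φ.toLinearMap) hfr).mp hinj
  exact ⟨AlgEquiv.ofBijective φ ⟨hinj, hsurj⟩⟩

lemma equiv_case3 (p : ℂ[X]) {r : ℂ} (hp : p = (X - C r) ^ 3) :
    Nonempty (AdjoinRoot p ≃ₐ[ℂ] AdjoinRoot ((X : ℂ[X]) ^ 3)) := by
  have hpm : p.Monic := by
    rw [hp]; exact (monic_X_sub_C r).pow 3
  have hpd : p.natDegree = 3 := by
    rw [hp]
    compute_degree!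
  set ar : AdjoinRoot ((X : ℂ[X]) ^ 3) := AdjoinRoot.root _ + algebraMap ℂ _ r with har
  have h0 : aeval ar p = 0 := by
    rw [hp]
    simp only [map_pow, map_sub, aeval_X, aeval_C, har]
    rw [show AdjoinRoot.root ((X : ℂ[X]) ^ 3) + algebraMap ℂ _ r - algebraMap ℂ _ r
        = AdjoinRoot.root ((X : ℂ[X]) ^ 3) by ring]
    exact rootX3_cube
  set φ : AdjoinRoot p →ₐ[ℂ] AdjoinRoot ((X : ℂ[X]) ^ 3) :=
    AdjoinRoot.liftAlgHom p (Algebra.ofId ℂ _) ar h0 with hφ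
  have hinj : Function.Injective φ := by
    rw [injective_iff_map_eq_zero]
    intro z hz
    obtain ⟨q, rfl⟩ := AdjoinRoot.mk_surjective z
    change aeval _ q = 0 at hz
    have hdr : (X - C r) ^ 3 ∣ q := aeval_shift_root (by rw [← har]; exact hz)
    exact AdjoinRoot.mk_eq_zero.mpr (by rw [hp]; exact hdr)
  have : Module.Finite ℂ (AdjoinRoot p) :=
    Module.Finite.of_basis (AdjoinRoot.powerBasis' hpm).basis
  have hX3m : ((X : ℂ[X]) ^ 3).Monic := monic_X_pow 3
  have : Module.Finite ℂ (AdjoinRoot ((X : ℂ[X]) ^ 3)) :=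
    Module.Finite.of_basis (AdjoinRoot.powerBasis' hX3m).basis
  have hfr : Module.finrank ℂ (AdjoinRoot p)
      = Module.finrank ℂ (AdjoinRoot ((X : ℂ[X]) ^ 3)) := by
    rw [(AdjoinRoot.powerBasis' hpm).finrank, AdjoinRoot.powerBasis'_dim, hpd,
      (AdjoinRoot.powerBasis' hX3m).finrank, AdjoinRoot.powerBasis'_dim]
    simp
  have hsurj : Function.Surjective φ :=
    (LinearMap.injective_iff_surjective_of_finrank_eq_finrank
      (f := φ.toLinearMap) hfr).mp hinj
  exact ⟨AlgEquiv.ofBijective φ ⟨hinj, hsurj⟩⟩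

end JordanClassificationAux

/-- **Classification of 3-dimensional rank 3 complex Jordan algebras.**
A 3-dimensional complex Jordan algebra of rank 3 (i.e. containing an element
`x` with `(1, x, x·x)` linearly independent) is isomorphic as a ℂ-algebra to
exactly one of `ℂ × ℂ × ℂ`, `ℂ × ℂ[X]/(X²)` and `ℂ[X]/(X³)`. -/
theorem classification_rank3_jordan_dim3
    (J : Type) [AddCommGroup J] [Module ℂ J] [FiniteDimensional ℂ J]
    (mul : J →ₗ[ℂ] J →ₗ[ℂ] J) (one : J)
    (hcomm : ∀ x y : J, mul x y = mul y x)
    (hone : ∀ x : J, mul one x = x)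
    (hjordan : ∀ x y : J, mul (mul x x) (mul x y) = mul x (mul (mul x x) y))
    (hdim : Module.finrank ℂ J = 3)
    (hrank : ∃ x : J, LinearIndependent ℂ ![one, x, mul x x]) :
    (IsAlgIsoTo J mul one (ℂ × ℂ × ℂ) ∧
      ¬ IsAlgIsoTo J mul one (ℂ × (ℂ[X] ⧸ Ideal.span {(X : ℂ[X]) ^ 2})) ∧
      ¬ IsAlgIsoTo J mul one (ℂ[X] ⧸ Ideal.span {(X : ℂ[X]) ^ 3})) ∨
    (¬ IsAlgIsoTo J mul one (ℂ × ℂ × ℂ) ∧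
      IsAlgIsoTo J mul one (ℂ × (ℂ[X] ⧸ Ideal.span {(X : ℂ[X]) ^ 2})) ∧
      ¬ IsAlgIsoTo J mul one (ℂ[X] ⧸ Ideal.span {(X : ℂ[X]) ^ 3})) ∨
    (¬ IsAlgIsoTo J mul one (ℂ × ℂ × ℂ) ∧
      ¬ IsAlgIsoTo J mul one (ℂ × (ℂ[X] ⧸ Ideal.span {(X : ℂ[X]) ^ 2})) ∧
      IsAlgIsoTo J mul one (ℂ[X] ⧸ Ideal.span {(X : ℂ[X]) ^ 3})) := by
  obtain ⟨p, hpm, hpd, hiso⟩ :=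
    exists_iso_adjoinRoot J mul one hcomm hone hjordan hdim hrank
  have hisoA : IsAlgIsoTo J mul one (AdjoinRoot p) := hiso
  rcases cubic_factor p hpm hpd with ⟨a, b, c, hab, hac, hbc, hp⟩ | ⟨s, r, hsr, hp⟩ | ⟨r, hp⟩
  · obtain ⟨f⟩ := equiv_case1 p hab hac hbc hp
    have h1 : IsAlgIsoTo J mul one (ℂ × ℂ × ℂ) := IsAlgIsoTo_aux_trans hisoA f
    refine Or.inl ⟨h1, ?_, ?_⟩
    · intro h2
      obtain ⟨g⟩ := ringEquiv_of_both h1 h2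
      exact no_equiv_1_2 g
    · intro h3
      obtain ⟨g⟩ := ringEquiv_of_both h1 h3
      exact no_equiv_1_3 g
  · obtain ⟨f⟩ := equiv_case2 p hsr hp
    have h2 : IsAlgIsoTo J mul one (ℂ × AdjoinRoot ((X : ℂ[X]) ^ 2)) :=
      IsAlgIsoTo_aux_trans hisoA f
    refine Or.inr (Or.inl ⟨?_, h2, ?_⟩)
    · intro h1
      obtain ⟨g⟩ := ringEquiv_of_both h1 h2
      exact no_equiv_1_2 g
    · intro h3
      obtain ⟨g⟩ := ringEquiv_of_both h2 h3
      exact no_equiv_2_3 g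
  · obtain ⟨f⟩ := equiv_case3 p hp
    have h3 : IsAlgIsoTo J mul one (AdjoinRoot ((X : ℂ[X]) ^ 3)) :=
      IsAlgIsoTo_aux_trans hisoA f
    refine Or.inr (Or.inr ⟨?_, ?_, h3⟩)
    · intro h1
      obtain ⟨g⟩ := ringEquiv_of_both h1 h3
      exact no_equiv_1_3 g
    · intro h2
      obtain ⟨g⟩ := ringEquiv_of_both h2 h3
      exact no_equiv_2_3 g
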